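/- Let P be a periodic pattern of length m over {0,…,σ−1}, s = L-head(P) and H = L-root(P), and let Occᵃ⁻(P,T) = {j ∈ R_{s,H} ∩ Occ(P,T) ∩ R⁻ : L-exp(j) > L-exp(P)}. If pend(P) ≤ m, then Occᵃ⁻(P,T) = ∅. Otherwise (i.e., if pend(P) = m+1), it holds Occᵃ⁻(P,T) = {j ∈ R⁻_{s,H} : L-exp(j) > L-exp(P)}. -/

import Mathlib

open scoped Classical

namespace CSA

/-- Character of a 1-indexed string at position `i` (junk value 0 out of range). -/
def idx (S : List ℕ) (i : ℕ) : ℕ := S.getD (i - 1) 0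

/-- Substring `S[i..j)` in the 1-indexed, half-open convention. -/
def sub (S : List ℕ) (i j : ℕ) : List ℕ := (S.drop (i - 1)).take (j - i)

/-- Suffix `S[i..|S|]` (1-indexed). -/
def suf (S : List ℕ) (i : ℕ) : List ℕ := S.drop (i - 1)

/-- Length of the longest common prefix of two strings. -/
def lcp (A B : List ℕ) : ℕ := ((A.zip B).takeWhile fun p => p.1 == p.2).length

/-- `LCE T j₁ j₂` is the length of the longest common prefix of `T[j₁..n]` and `T[j₂..n]`. -/
def LCE (T : List ℕ) (j₁ j₂ : ℕ) : ℕ := lcp (suf T j₁) (suf T j₂)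

/-- `p` is a period of `S`. -/
def IsPeriod (S : List ℕ) (p : ℕ) : Prop :=
  1 ≤ p ∧ p ≤ S.length ∧ ∀ i, i + p < S.length → S.getD i 0 = S.getD (i + p) 0

/-- The shortest period of `S`. -/
noncomputable def per (S : List ℕ) : ℕ := sInf {p | IsPeriod S p}

/-- `R = {i ∈ [1..n−3τ+2] : per(T[i..i+3τ−1)) ≤ τ/3}`. -/
noncomputable def R (T : List ℕ) (τ : ℕ) : Set ℕ :=
  {i | 1 ≤ i ∧ i + 3 * τ ≤ T.length + 2 ∧ 3 * per (sub T i (i + 3 * τ - 1)) ≤ τ}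

/-- `rend(j) = min{j′ ≥ j : j′ ∉ R} + 3τ − 2`. -/
noncomputable def rend (T : List ℕ) (τ j : ℕ) : ℕ :=
  sInf {j' | j ≤ j' ∧ j' ∉ R T τ} + 3 * τ - 2

/-- `L-root(j)`: lexicographically smallest among `{T[j+t..j+t+p) : 0 ≤ t < p}`
where `p = per(T[j..j+3τ−1))`. -/
noncomputable def Lroot (T : List ℕ) (τ j : ℕ) : List ℕ :=
  WithTop.untopD [] ((Finset.range (per (sub T j (j + 3 * τ - 1)))).image fun t =>
      sub T (j + t) (j + t + per (sub T j (j + 3 * τ - 1)))).min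

/-- `L-head(j)`: the (unique) `s ∈ [0..p)` with `T[j+s..j+s+p) = L-root(j)`. -/
noncomputable def Lhead (T : List ℕ) (τ j : ℕ) : ℕ :=
  sInf {s | s < per (sub T j (j + 3 * τ - 1)) ∧
    sub T (j + s) (j + s + per (sub T j (j + 3 * τ - 1))) = Lroot T τ j}

noncomputable def Lexp (T : List ℕ) (τ j : ℕ) : ℕ :=
  (rend T τ j - j - Lhead T τ j) / per (sub T j (j + 3 * τ - 1))

noncomputable def Ltail (T : List ℕ) (τ j : ℕ) : ℕ :=
  (rend T τ j - j - Lhead T τ j) % per (sub T j (j + 3 * τ - 1))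

noncomputable def rendfull (T : List ℕ) (τ j : ℕ) : ℕ := rend T τ j - Ltail T τ j

/-- `type(j) = +1` if `rend(j) ≤ n` and `T[rend(j)] > T[rend(j)−p]`, and `−1` otherwise. -/
noncomputable def typ (T : List ℕ) (τ j : ℕ) : ℤ :=
  if rend T τ j ≤ T.length ∧
      idx T (rend T τ j - per (sub T j (j + 3 * τ - 1))) < idx T (rend T τ j)
    then 1 else -1

noncomputable def Rminus (T : List ℕ) (τ : ℕ) : Set ℕ := {j ∈ R T τ | typ T τ j = -1}

noncomputable def RH (T : List ℕ) (τ : ℕ) (H : List ℕ) : Set ℕ :=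
  {j ∈ R T τ | Lroot T τ j = H}

noncomputable def RsH (T : List ℕ) (τ s : ℕ) (H : List ℕ) : Set ℕ :=
  {j ∈ R T τ | Lroot T τ j = H ∧ Lhead T τ j = s}

noncomputable def RminusH (T : List ℕ) (τ : ℕ) (H : List ℕ) : Set ℕ :=
  Rminus T τ ∩ RH T τ H

noncomputable def RminusSH (T : List ℕ) (τ s : ℕ) (H : List ℕ) : Set ℕ :=
  Rminus T τ ∩ RsH T τ s H

noncomputable def Rprime (T : List ℕ) (τ : ℕ) : Set ℕ := {j ∈ R T τ | j - 1 ∉ R T τ}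

/-- `Occ(P,S)`: the set of (1-indexed) starting positions of occurrences of `P` in `S`. -/
def OccSet (P S : List ℕ) : Set ℕ :=
  {j | 1 ≤ j ∧ j + P.length ≤ S.length + 1 ∧ sub S j (j + P.length) = P}

noncomputable def RangeBeg (P T : List ℕ) : ℕ :=
  Set.ncard {i | 1 ≤ i ∧ i ≤ T.length ∧ suf T i < P}

noncomputable def RangeEnd (P T : List ℕ) : ℕ := RangeBeg P T + (OccSet P T).ncard

/-- `ISA[j]`: the lexicographic rank of the suffix `T[j..n]` among all suffixes of `T`. -/
noncomputable def ISA (T : List ℕ) (j : ℕ) : ℕ :=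
  Set.ncard {j' | 1 ≤ j' ∧ j' ≤ T.length ∧ suf T j' ≤ suf T j}

/-- `succ_S(i) = min{j ∈ S ∪ {n−2τ+2} : j ≥ i}`. -/
noncomputable def succS (T : List ℕ) (τ : ℕ) (Sync : Set ℕ) (i : ℕ) : ℕ :=
  sInf {j | i ≤ j ∧ (j ∈ Sync ∨ j = T.length + 2 - 2 * τ)}

/-- The set `D` of distinguishing prefixes. -/
noncomputable def Dset (T : List ℕ) (τ : ℕ) (Sync : Set ℕ) : Set (List ℕ) :=
  {X | ∃ i, 1 ≤ i ∧ i + 3 * τ ≤ T.length + 2 ∧ i ∉ R T τ ∧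
    X = sub T i (succS T τ Sync i + 2 * τ)}

/-- `T^∞[i] = T[1 + ((i−1) mod n)]` for `i : ℤ`. -/
def tinf (T : List ℕ) (i : ℤ) : ℕ := idx T (((i - 1).emod (T.length : ℤ)).toNat + 1)

/-- `W[i]`: the reverse of `T^∞[s^lex_i − τ .. s^lex_i + 2τ)`. -/
def Wstr (T : List ℕ) (τ : ℕ) (slex : ℕ → ℕ) (i : ℕ) : List ℕ :=
  ((List.range (3 * τ)).map fun k => tinf T ((slex i : ℤ) - (τ : ℤ) + (k : ℤ))).reverse

/- Pattern versions of the `L`-decomposition functions. -/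

noncomputable def perP (τ : ℕ) (P : List ℕ) : ℕ := per (P.take (3 * τ - 1))

/-- A pattern is periodic if `|P| ≥ 3τ−1` and `per(P[1..3τ−1]) ≤ τ/3`. -/
noncomputable def Periodic (τ : ℕ) (P : List ℕ) : Prop :=
  3 * τ - 1 ≤ P.length ∧ 3 * perP τ P ≤ τ

noncomputable def pend (τ : ℕ) (P : List ℕ) : ℕ :=
  1 + perP τ P + lcp P (P.drop (perP τ P))

noncomputable def LrootP (τ : ℕ) (P : List ℕ) : List ℕ :=
  WithTop.untopD [] ((Finset.range (perP τ P)).image fun t => (P.drop t).take (perP τ P)).min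

noncomputable def LheadP (τ : ℕ) (P : List ℕ) : ℕ :=
  sInf {s | s < perP τ P ∧ (P.drop s).take (perP τ P) = LrootP τ P}

noncomputable def LexpP (τ : ℕ) (P : List ℕ) : ℕ :=
  (pend τ P - 1 - LheadP τ P) / perP τ P

noncomputable def LtailP (τ : ℕ) (P : List ℕ) : ℕ :=
  (pend τ P - 1 - LheadP τ P) % perP τ P

noncomputable def pendfullP (τ : ℕ) (P : List ℕ) : ℕ := pend τ P - LtailP τ P

noncomputable def typP (τ : ℕ) (P : List ℕ) : ℤ :=
  if pend τ P ≤ P.length ∧ idx P (pend τ P - perP τ P) < idx P (pend τ P)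
    then 1 else -1

/-- `pow(H)`: the prefix of length `|H|·⌈τ/|H|⌉` of `H^∞`. -/
def powS (τ : ℕ) (H : List ℕ) : List ℕ :=
  (List.replicate ((τ + H.length - 1) / H.length) H).flatten

/-! ### Auxiliary lemmas -/

lemma getD_drop' (l : List ℕ) (k i : ℕ) : (l.drop k).getD i 0 = l.getD (k+i) 0 := by
  simp [List.getD_eq_getElem?_getD, List.getElem?_drop]

lemma getD_take' (l : List ℕ) (k i : ℕ) (h : i < k) : (l.take k).getD i 0 = l.getD i 0 := by
  simp [List.getD_eq_getElem?_getD, List.getElem?_take, h]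

lemma lcp_nil_left (B : List ℕ) : lcp [] B = 0 := by simp [lcp]
lemma lcp_nil_right (A : List ℕ) : lcp A [] = 0 := by simp [lcp]

lemma lcp_cons (a b : ℕ) (A B : List ℕ) :
    lcp (a::A) (b::B) = if a = b then lcp A B + 1 else 0 := by
  simp only [lcp, List.zip_cons_cons, List.takeWhile_cons]
  by_cases h : a = b <;> simp [h]

lemma lcp_le_left : ∀ (A B : List ℕ), lcp A B ≤ A.length := by
  intro A
  induction A with
  | nil => intro B; simp [lcp_nil_left]
  | cons a A ih =>
    intro B
    cases B with
    | nil => simp [lcp_nil_right]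
    | cons b B =>
      rw [lcp_cons]; by_cases h : a = b <;> simp [h]
      exact ih B

lemma lcp_le_right : ∀ (A B : List ℕ), lcp A B ≤ B.length := by
  intro A
  induction A with
  | nil => intro B; simp [lcp_nil_left]
  | cons a A ih =>
    intro B
    cases B with
    | nil => simp [lcp_nil_right]
    | cons b B =>
      rw [lcp_cons]; by_cases h : a = b <;> simp [h]
      exact ih B

lemma lcp_getD : ∀ (A B : List ℕ) (i : ℕ), i < lcp A B → A.getD i 0 = B.getD i 0 := by
  intro A
  induction A with
  | nil => intro B i h; simp [lcp_nil_left] at h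
  | cons a A ih =>
    intro B i h
    cases B with
    | nil => simp [lcp_nil_right] at h
    | cons b B =>
      rw [lcp_cons] at h
      by_cases hab : a = b
      · simp [hab] at h
        cases i with
        | zero => simp [hab]
        | succ i => simpa using ih B i (by omega)
      · simp [hab] at h

lemma lcp_mismatch : ∀ (A B : List ℕ), lcp A B < A.length → lcp A B < B.length →
    A.getD (lcp A B) 0 ≠ B.getD (lcp A B) 0 := by
  intro A
  induction A with
  | nil => intro B h _; simp at h
  | cons a A ih =>
    intro B hA hB
    cases B with
    | nil => simp at hB
    | cons b B =>
      rw [lcp_cons] at *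
      by_cases hab : a = b
      · simp [hab] at hA hB ⊢
        simpa using ih B (by omega) (by omega)
      · simp [hab]

lemma le_lcp : ∀ (A B : List ℕ) (k : ℕ), k ≤ A.length → k ≤ B.length →
    (∀ i, i < k → A.getD i 0 = B.getD i 0) → k ≤ lcp A B := by
  intro A
  induction A with
  | nil => intro B k h _ _; simp at h; simp [h]
  | cons a A ih =>
    intro B k hA hB hag
    cases B with
    | nil => simp at hB; omega
    | cons b B =>
      cases k with
      | zero => omega
      | succ k =>
        have h0 := hag 0 (by omega)
        simp at h0
        rw [lcp_cons, if_pos h0]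
        have := ih B k (by simpa using hA) (by simpa using hB)
          (fun i hi => by simpa using hag (i+1) (by omega))
        omega

lemma per_isPeriod {S : List ℕ} (h : 1 ≤ S.length) : IsPeriod S (per S) := by
  have hS : IsPeriod S S.length := ⟨h, le_refl _, fun i hi => absurd hi (by omega)⟩
  have hmem : S.length ∈ {p | IsPeriod S p} := hS
  exact Nat.sInf_mem ⟨S.length, hmem⟩

lemma per_le {S : List ℕ} {q : ℕ} (h : IsPeriod S q) : per S ≤ q := Nat.sInf_le h

lemma sub_window_len (T : List ℕ) (τ w : ℕ) (hτ : 1 ≤ τ) (h1 : 1 ≤ w)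
    (h2 : w + 3*τ ≤ T.length + 2) : (sub T w (w + 3*τ - 1)).length = 3*τ - 1 := by
  simp [sub, List.length_take, List.length_drop]
  omega

lemma sub_length (T : List ℕ) (i jj : ℕ) :
    (sub T i jj).length = min (jj - i) (T.length - (i-1)) := by
  simp [sub]

lemma sub_getD (T : List ℕ) (i jj k : ℕ) (h1 : 1 ≤ i) (hk : k < jj - i) :
    (sub T i jj).getD k 0 = idx T (i + k) := by
  unfold sub idx
  rw [getD_take' _ _ _ hk, getD_drop']
  congr 1
  omega

lemma isPeriod_window_iff (T : List ℕ) (τ w q : ℕ) (hτ : 1 ≤ τ) (h1 : 1 ≤ w)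
    (h2 : w + 3*τ ≤ T.length + 2) :
    IsPeriod (sub T w (w + 3*τ - 1)) q ↔
      (1 ≤ q ∧ q ≤ 3*τ - 1 ∧ ∀ i, i + q < 3*τ - 1 → idx T (w+i) = idx T (w+i+q)) := by
  have hlen := sub_window_len T τ w hτ h1 h2
  unfold IsPeriod
  rw [hlen]
  constructor
  · rintro ⟨a, b, c⟩
    refine ⟨a, b, fun i hi => ?_⟩
    have := c i hi
    rwa [sub_getD _ _ _ _ h1 (by omega), sub_getD _ _ _ _ h1 (by omega),
      show w + (i+q) = w+i+q from by omega] at this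
  · rintro ⟨a, b, c⟩
    refine ⟨a, b, fun i hi => ?_⟩
    have := c i hi
    rwa [sub_getD _ _ _ _ h1 (by omega), sub_getD _ _ _ _ h1 (by omega),
      show w + (i+q) = w+i+q from by omega]

lemma R_window (T : List ℕ) (τ w : ℕ) (hτ : 1 ≤ τ) (hw : w ∈ R T τ) :
    1 ≤ per (sub T w (w + 3*τ - 1)) ∧ 3 * per (sub T w (w + 3*τ - 1)) ≤ τ ∧
    ∀ i, i + per (sub T w (w + 3*τ - 1)) < 3*τ - 1 →
      idx T (w+i) = idx T (w+i+per (sub T w (w + 3*τ - 1))) := by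
  obtain ⟨h1, h2, h3⟩ := hw
  have hlen := sub_window_len T τ w hτ h1 h2
  have hper := per_isPeriod (S := sub T w (w + 3*τ - 1)) (by omega)
  rw [isPeriod_window_iff T τ w _ hτ h1 h2] at hper
  exact ⟨hper.1, h3, hper.2.2⟩
lemma adj_per (T : List ℕ) (τ w : ℕ) (hτ : 1 ≤ τ) (hw : w ∈ R T τ) (hw1 : w + 1 ∈ R T τ) :
    per (sub T w (w + 3*τ - 1)) = per (sub T (w+1) (w + 1 + 3*τ - 1)) := by
  obtain ⟨hA1, hA2, hA3⟩ := R_window T τ w hτ hw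
  obtain ⟨hB1, hB2, hB3⟩ := R_window T τ (w+1) hτ hw1
  set p' := per (sub T w (w + 3*τ - 1)) with hp'
  set q' := per (sub T (w+1) (w + 1 + 3*τ - 1)) with hq'
  have hw11 : 1 ≤ w := hw.1
  have hw2 : w + 3*τ ≤ T.length + 2 := hw.2.1
  have hw12 : w + 1 + 3*τ ≤ T.length + 2 := hw1.2.1
  have hBp : IsPeriod (sub T (w+1) (w + 1 + 3*τ - 1)) p' := by
    rw [isPeriod_window_iff T τ (w+1) p' hτ (by omega) hw12]
    refine ⟨hA1, by omega, fun i hi => ?_⟩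
    rcases lt_or_ge (i + p') (3*τ - 2) with hc | hc
    · have := hA3 (i+1) (by omega)
      rw [show w+1+i = w + (i+1) from by omega]
      exact this
    · have a1 := hB3 (3*τ-2-q') (by omega)
      have a2 := hA3 (3*τ-1-q'-p') (by omega)
      have a3 := hB3 (3*τ-2-q'-p') (by omega)
      rw [show w+1+(3*τ-2-q') = w + (3*τ-1-q') from by omega,
          show w+(3*τ-1-q') + q' = w + (3*τ-1) from by omega] at a1
      rw [show w+(3*τ-1-q'-p') + p' = w + (3*τ-1-q') from by omega] at a2
      rw [show w+1+(3*τ-2-q'-p') = w + (3*τ-1-q'-p') from by omega,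
          show w+(3*τ-1-q'-p') + q' = w + (3*τ-1-p') from by omega] at a3
      rw [show w+1+i = w + (3*τ-1-p') from by omega,
          show w + (3*τ-1-p') + p' = w + (3*τ-1) from by omega]
      exact a3.symm.trans (a2.trans a1)
  have hAq : IsPeriod (sub T w (w + 3*τ - 1)) q' := by
    rw [isPeriod_window_iff T τ w q' hτ hw11 hw2]
    refine ⟨hB1, by omega, fun i hi => ?_⟩
    cases i with
    | succ i =>
      have := hB3 i (by omega)
      rw [show w + (i+1) = w+1+i from by omega]
      exact this
    | zero =>
      have b1 := hA3 0 (by omega)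
      have b2 := hB3 (p'-1) (by omega)
      have b3 := hA3 q' (by omega)
      rw [show w + 0 = w from by omega] at b1 ⊢
      rw [show w+1+(p'-1) = w+p' from by omega,
          show w+p'+q' = w+q'+p' from by omega] at b2
      exact (b1.trans b2).trans b3.symm
  have h1 : p' ≤ q' := per_le hAq
  have h2 : q' ≤ p' := per_le hBp
  omega

lemma run_facts (T : List ℕ) (τ j : ℕ) (hτ : 1 ≤ τ) (hj : j ∈ R T τ) :
    ∃ e, j < e ∧ e ∉ R T τ ∧ (∀ u, j ≤ u → u < e → u ∈ R T τ) ∧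
      rend T τ j = e + 3*τ - 2 ∧ e + 3*τ ≤ T.length + 3 := by
  have hj1 : 1 ≤ j := hj.1
  have hj2 : j + 3*τ ≤ T.length + 2 := hj.2.1
  have hw0 : (T.length + 3 - 3*τ) ∈ {j' | j ≤ j' ∧ j' ∉ R T τ} := by
    refine ⟨by omega, fun hmem => ?_⟩
    have h2 := hmem.2.1
    omega
  have hne : {j' | j ≤ j' ∧ j' ∉ R T τ}.Nonempty := ⟨_, hw0⟩
  have hmem := Nat.sInf_mem hne
  obtain ⟨hje, heR⟩ := hmem
  refine ⟨sInf {j' | j ≤ j' ∧ j' ∉ R T τ}, ?_, heR, ?_, ?_, ?_⟩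
  · rcases lt_or_eq_of_le hje with h | h
    · exact h
    · exact absurd (h ▸ hj) heR
  · intro u h1 h2
    by_contra hu
    have hle : sInf {j' | j ≤ j' ∧ j' ∉ R T τ} ≤ u := Nat.sInf_le ⟨h1, hu⟩
    omega
  · rfl
  · have := Nat.sInf_le hw0
    omega

lemma run_per (T : List ℕ) (τ j e : ℕ) (hτ : 1 ≤ τ)
    (hint : ∀ u, j ≤ u → u < e → u ∈ R T τ) :
    ∀ w, j ≤ w → w < e → per (sub T w (w + 3*τ - 1)) = per (sub T j (j + 3*τ - 1)) := by
  intro w hw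
  induction w, hw using Nat.le_induction with
  | base => intro _; rfl
  | succ w hw ih =>
    intro hlt
    rw [← adj_per T τ w hτ (hint w hw (by omega)) (hint (w+1) (by omega) hlt)]
    exact ih (by omega)

lemma run_period (T : List ℕ) (τ j : ℕ) (hτ : 1 ≤ τ) (hj : j ∈ R T τ) :
    ∀ x, j ≤ x → x + per (sub T j (j + 3*τ - 1)) < rend T τ j →
      idx T x = idx T (x + per (sub T j (j + 3*τ - 1))) := by
  obtain ⟨e, hje, heR, hint, hrend, hew⟩ := run_facts T τ j hτ hj
  obtain ⟨hp1, hp2, _⟩ := R_window T τ j hτ hj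
  intro x hx hxp
  set w := min x (e-1) with hwdef
  have hw1 : j ≤ w := by omega
  have hw2 : w < e := by omega
  have hwR := hint w hw1 hw2
  obtain ⟨_, _, hwin⟩ := R_window T τ w hτ hwR
  rw [run_per T τ j e hτ hint w hw1 hw2] at hwin
  have := hwin (x - w) (by omega)
  rwa [show w + (x - w) = x from by omega] at this

lemma untop'_min_mem {α : Type*} [LinearOrder α] (s : Finset α) (h : s.Nonempty) (d : α) :
    WithTop.untopD d s.min ∈ s := by
  rw [← Finset.coe_min' h]
  simpa using Finset.min'_mem s h

lemma lroot_mem (T : List ℕ) (τ j : ℕ) (hτ : 1 ≤ τ) (hj : j ∈ R T τ) :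
    ∃ t, t < per (sub T j (j + 3*τ - 1)) ∧
      sub T (j + t) (j + t + per (sub T j (j + 3*τ - 1))) = Lroot T τ j := by
  obtain ⟨hp1, _, _⟩ := R_window T τ j hτ hj
  have hne : ((Finset.range (per (sub T j (j + 3*τ - 1)))).image fun t =>
      sub T (j + t) (j + t + per (sub T j (j + 3*τ - 1)))).Nonempty :=
    ⟨_, Finset.mem_image_of_mem _ (Finset.mem_range.mpr (show 0 < _ from hp1))⟩
  have hmem := untop'_min_mem _ hne ([] : List ℕ)
  rw [Finset.mem_image] at hmem
  obtain ⟨t, ht, hts⟩ := hmem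
  refine ⟨t, Finset.mem_range.mp ht, ?_⟩
  rw [hts]
  rfl

lemma lhead_spec (T : List ℕ) (τ j : ℕ) (hτ : 1 ≤ τ) (hj : j ∈ R T τ) :
    Lhead T τ j < per (sub T j (j + 3*τ - 1)) ∧
      sub T (j + Lhead T τ j) (j + Lhead T τ j + per (sub T j (j + 3*τ - 1))) = Lroot T τ j := by
  obtain ⟨t, ht1, ht2⟩ := lroot_mem T τ j hτ hj
  have hmem : t ∈ {s | s < per (sub T j (j + 3*τ - 1)) ∧
      sub T (j + s) (j + s + per (sub T j (j + 3*τ - 1))) = Lroot T τ j} := ⟨ht1, ht2⟩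
  exact Nat.sInf_mem ⟨t, hmem⟩

lemma perP_isPeriod (τ : ℕ) (P : List ℕ) (hτ : 1 ≤ τ) (hlen : 3*τ - 1 ≤ P.length) :
    1 ≤ perP τ P ∧ perP τ P ≤ 3*τ - 1 ∧
      ∀ i, i + perP τ P < 3*τ - 1 → P.getD i 0 = P.getD (i + perP τ P) 0 := by
  unfold perP
  have hl : (P.take (3*τ-1)).length = 3*τ - 1 := by
    simp [List.length_take]; omega
  obtain ⟨a, b, c⟩ := per_isPeriod (S := P.take (3*τ-1)) (by omega)
  rw [hl] at b c
  refine ⟨a, b, fun i hi => ?_⟩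
  have := c i hi
  rwa [getD_take' _ _ _ (by omega), getD_take' _ _ _ (by omega)] at this

lemma lrootP_mem (τ : ℕ) (P : List ℕ) (hτ : 1 ≤ τ) (hlen : 3*τ - 1 ≤ P.length) :
    ∃ t, t < perP τ P ∧ (P.drop t).take (perP τ P) = LrootP τ P := by
  obtain ⟨hp1, _, _⟩ := perP_isPeriod τ P hτ hlen
  have hne : ((Finset.range (perP τ P)).image fun t => (P.drop t).take (perP τ P)).Nonempty :=
    ⟨_, Finset.mem_image_of_mem _ (Finset.mem_range.mpr (show 0 < _ from hp1))⟩
  have hmem := untop'_min_mem _ hne ([] : List ℕ)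
  rw [Finset.mem_image] at hmem
  obtain ⟨t, ht, hts⟩ := hmem
  refine ⟨t, Finset.mem_range.mp ht, ?_⟩
  rw [hts]
  rfl

lemma lheadP_spec (τ : ℕ) (P : List ℕ) (hτ : 1 ≤ τ) (hlen : 3*τ - 1 ≤ P.length) :
    LheadP τ P < perP τ P ∧ (P.drop (LheadP τ P)).take (perP τ P) = LrootP τ P := by
  obtain ⟨t, ht1, ht2⟩ := lrootP_mem τ P hτ hlen
  have hmem : t ∈ {s | s < perP τ P ∧ (P.drop s).take (perP τ P) = LrootP τ P} := ⟨ht1, ht2⟩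
  exact Nat.sInf_mem ⟨t, hmem⟩

lemma rend_le (T : List ℕ) (τ j j' : ℕ) (h1 : j ≤ j') (h2 : j' ∉ R T τ) :
    rend T τ j ≤ j' + 3*τ - 2 := by
  unfold rend
  have hle : sInf {j'' | j ≤ j'' ∧ j'' ∉ R T τ} ≤ j' := Nat.sInf_le ⟨h1, h2⟩
  omega

lemma agree (f g : ℕ → ℕ) (p s L : ℕ) (hp : 1 ≤ p) (hsp : s < p) (hspL : s + p ≤ L)
    (hf : ∀ x, x + p < L → f x = f (x+p)) (hg : ∀ x, x + p < L → g x = g (x+p))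
    (hag : ∀ r, r < p → f (s+r) = g (s+r)) : ∀ i, i < L → f i = g i := by
  intro i
  induction i using Nat.strong_induction_on with
  | _ i IH =>
    intro hiL
    rcases lt_or_ge i s with h1 | h1
    · have e1 : f i = f (i+p) := hf i (by omega)
      have e2 : g i = g (i+p) := hg i (by omega)
      have e3 : f (s + (i+p-s)) = g (s + (i+p-s)) := hag _ (by omega)
      rw [show s + (i+p-s) = i+p from by omega] at e3
      rw [e1, e3, ← e2]
    · rcases lt_or_ge i (s+p) with h2 | h2
      · have := hag (i - s) (by omega)
        rwa [show s + (i-s) = i from by omega] at this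
      · have e1 : f (i-p) = f i := by
          have := hf (i-p) (by omega)
          rwa [show i-p+p = i from by omega] at this
        have e2 : g (i-p) = g i := by
          have := hg (i-p) (by omega)
          rwa [show i-p+p = i from by omega] at this
        rw [← e1, ← e2]
        exact IH (i-p) (by omega) (by omega)
/-- Lemma: characterization of `Occᵃ⁻(P,T)`. -/
theorem statement_14
    (σ n τ : ℕ) (T : List ℕ)
    (hσ : 2 ≤ σ) (hn : 2 ≤ n) (hτ : 1 ≤ τ)
    (hlen : T.length = n) (halph : ∀ c ∈ T, c < σ)
    (hlast : idx T n = 0) (huniq : ∀ i, 1 ≤ i → i < n → idx T i ≠ 0)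
    (P : List ℕ) (m : ℕ) (hm : P.length = m) (halphP : ∀ c ∈ P, c < σ)
    (hperiodic : Periodic τ P)
    (s : ℕ) (hs : s = LheadP τ P) (H : List ℕ) (hH : H = LrootP τ P)
    (OccAm : Set ℕ)
    (hOccAm : OccAm = {j | j ∈ RsH T τ s H ∩ OccSet P T ∩ Rminus T τ ∧
      LexpP τ P < Lexp T τ j}) :
    (pend τ P ≤ m → OccAm = ∅) ∧
    (pend τ P = m + 1 →
      OccAm = {j | j ∈ RminusSH T τ s H ∧ LexpP τ P < Lexp T τ j}) := by
  classical
  have hper' : 3 * τ - 1 ≤ P.length ∧ 3 * perP τ P ≤ τ := hperiodic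
  obtain ⟨hm3, hper3⟩ := hper'
  rw [hm] at hm3
  have hPP := perP_isPeriod τ P hτ (by omega)
  obtain ⟨hp1, hp2, hp3⟩ := hPP
  set p := perP τ P with hp
  set ℓ := lcp P (P.drop p) with hldef
  have hpend : pend τ P = 1 + p + ℓ := by
    unfold pend
    rw [← hp, ← hldef]
  have hlge : 3*τ - 1 - p ≤ ℓ := by
    rw [hldef]
    apply le_lcp
    · omega
    · rw [List.length_drop]; omega
    · intro i hi
      rw [getD_drop']
      have := hp3 i (by omega)
      rwa [Nat.add_comm i p] at this
  have hlle : ℓ ≤ m - p := by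
    have h := lcp_le_right P (P.drop p)
    rw [← hldef, List.length_drop, hm] at h
    exact h
  have hlmatch : ∀ i, i < ℓ → P.getD i 0 = P.getD (p+i) 0 := by
    intro i hi
    rw [hldef] at hi
    have := lcp_getD P (P.drop p) i hi
    rwa [getD_drop'] at this
  refine ⟨?_, ?_⟩
  · -- Case pend ≤ m : OccAm = ∅
    intro hc
    rw [hOccAm, Set.eq_empty_iff_forall_notMem]
    intro j hjmem
    simp only [Set.mem_setOf_eq, Set.mem_inter_iff] at hjmem
    obtain ⟨⟨⟨hjRsH, hjOcc⟩, hjRm⟩, hexp⟩ := hjmem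
    obtain ⟨hjR, hrootj, hheadj⟩ := hjRsH
    obtain ⟨hj1, hjn, hjsub⟩ := hjOcc
    have hj2 : j + 3*τ ≤ T.length + 2 := hjR.2.1
    rw [hm] at hjn hjsub
    have hocc' : (T.drop (j-1)).take m = P := by
      have h := hjsub
      unfold sub at h
      rwa [show j + m - j = m from by omega] at h
    have hchar : ∀ i, i < m → idx T (j+i) = P.getD i 0 := by
      intro i hi
      rw [← hocc', getD_take' _ _ _ hi, getD_drop']
      unfold idx
      rw [show j+i-1 = j-1+i from by omega]
    have hwin : sub T j (j + 3*τ - 1) = P.take (3*τ - 1) := by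
      unfold sub
      rw [show j + 3*τ - 1 - j = 3*τ - 1 from by omega, ← hocc', List.take_take,
        Nat.min_eq_left (by omega)]
    have hperj : per (sub T j (j + 3*τ - 1)) = p := by
      rw [hwin, hp]
      rfl
    have hmis : P.getD ℓ 0 ≠ P.getD (p+ℓ) 0 := by
      have h := lcp_mismatch P (P.drop p) (by rw [← hldef, hm]; omega)
        (by rw [← hldef, List.length_drop, hm]; omega)
      rw [← hldef, getD_drop'] at h
      exact h
    have hTmis : idx T (j+ℓ) ≠ idx T (j+(p+ℓ)) := by
      rw [hchar ℓ (by omega), hchar (p+ℓ) (by omega)]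
      exact hmis
    have hTper : ∀ i, i < ℓ → idx T (j+i) = idx T (j+(p+i)) := by
      intro i hi
      rw [hchar i (by omega), hchar (p+i) (by omega)]
      exact hlmatch i hi
    set j' := j + (p + ℓ + 2 - 3*τ) with hj'def
    have hj'notR : j' ∉ R T τ := by
      intro hj'
      obtain ⟨hq1, hq2, hq3⟩ := R_window T τ j' hτ hj'
      set q := per (sub T j' (j' + 3*τ - 1)) with hqdef
      have hql : q ≤ ℓ := by omega
      have a1 := hq3 (3*τ-2-q) (by omega)
      have a2 := hTper (ℓ - q) (by omega)
      have a3 := hq3 (3*τ-2-q-p) (by omega)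
      rw [show j' + (3*τ-2-q) = j + (p+ℓ-q) from by omega,
          show j + (p+ℓ-q) + q = j + (p+ℓ) from by omega] at a1
      rw [show j + (p + (ℓ-q)) = j + (p+ℓ-q) from by omega] at a2
      rw [show j' + (3*τ-2-q-p) = j + (ℓ-q) from by omega,
          show j + (ℓ-q) + q = j + ℓ from by omega] at a3
      exact hTmis (a3.symm.trans (a2.trans a1))
    have hrle : rend T τ j ≤ j + (p + ℓ) := by
      have := rend_le T τ j j' (by omega) hj'notR
      omega
    have hle : Lexp T τ j ≤ LexpP τ P := by
      unfold Lexp LexpP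
      rw [hperj, hheadj, ← hp, ← hs]
      apply Nat.div_le_div_right
      omega
    exact absurd hexp (not_lt.mpr hle)
  · -- Case pend = m + 1
    intro hc
    rw [hOccAm]
    ext j
    simp only [Set.mem_setOf_eq, Set.mem_inter_iff, RminusSH]
    constructor
    · rintro ⟨⟨⟨hjRsH, _⟩, hjRm⟩, hx⟩
      exact ⟨⟨hjRm, hjRsH⟩, hx⟩
    · rintro ⟨⟨hjRm, hjRsH⟩, hx⟩
      refine ⟨⟨⟨hjRsH, ?_⟩, hjRm⟩, hx⟩
      obtain ⟨hjR, hrootj, hheadj⟩ := hjRsH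
      have hj1 : 1 ≤ j := hjR.1
      have hj2 : j + 3*τ ≤ T.length + 2 := hjR.2.1
      have hpT3 : 3 * per (sub T j (j + 3*τ - 1)) ≤ τ := hjR.2.2
      obtain ⟨hsT, hsubT⟩ := lhead_spec T τ j hτ hjR
      rw [hheadj] at hsT hsubT
      rw [hrootj] at hsubT
      obtain ⟨hsP, hsubP⟩ := lheadP_spec τ P hτ (by omega)
      rw [← hs] at hsP hsubP
      rw [← hp] at hsP hsubP
      rw [← hH] at hsubP
      have hHlen1 : H.length = per (sub T j (j + 3*τ - 1)) := by
        rw [← hsubT, sub_length]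
        omega
      have hHlen2 : H.length = p := by
        rw [← hsubP, List.length_take, List.length_drop, hm]
        omega
      have hpTp : per (sub T j (j + 3*τ - 1)) = p := by omega
      rw [hpTp] at hsT hsubT
      obtain ⟨e, hje, heR, hint, hrendE, hew⟩ := run_facts T τ j hτ hjR
      have hrendn : rend T τ j ≤ T.length + 1 := by omega
      have e1 : Lexp T τ j = (rend T τ j - j - s) / p := by
        unfold Lexp
        rw [hpTp, hheadj]
      have e2 : LexpP τ P = (m - s) / p := by
        unfold LexpP
        rw [← hs, ← hp, hc, show m + 1 - 1 - s = m - s from by omega]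
      have hrendm : j + m + 1 ≤ rend T τ j := by
        rcases le_or_gt (rend T τ j) (j + m) with hcon | h
        · exfalso
          have h1 : rend T τ j - j - s ≤ m - s := by omega
          have h2 : (rend T τ j - j - s) / p ≤ (m - s) / p := Nat.div_le_div_right h1
          rw [e1, e2] at hx
          exact absurd hx (not_lt.mpr h2)
        · omega
      have hrun := run_period T τ j hτ hjR
      rw [hpTp] at hrun
      have hPfull : ∀ x, x + p < m → P.getD x 0 = P.getD (x+p) 0 := by
        intro x hxm
        have := hlmatch x (by omega)
        rwa [Nat.add_comm p x] at this
      have hfT : ∀ x, x + p < m → idx T (j+x) = idx T (j+(x+p)) := by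
        intro x hxm
        have := hrun (j+x) (by omega) (by omega)
        rwa [show j+x+p = j+(x+p) from by omega] at this
      have hag : ∀ r, r < p → idx T (j+(s+r)) = P.getD (s+r) 0 := by
        intro r hr
        have h1 := sub_getD T (j+s) (j+s+p) r (by omega) (by omega)
        rw [hsubT] at h1
        have h2 : H.getD r 0 = P.getD (s+r) 0 := by
          rw [← hsubP, getD_take' _ _ _ hr, getD_drop']
        rw [show j+(s+r) = j+s+r from by omega, ← h1, h2]
      have hagree := agree (fun i => idx T (j+i)) (fun i => P.getD i 0) p s m
        hp1 hsP (by omega) hfT hPfull hag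
      have hsublen : (sub T j (j + P.length)).length = m := by
        unfold sub
        rw [List.length_take, List.length_drop, hm]
        omega
      refine ⟨hj1, ?_, ?_⟩
      · rw [hm]; omega
      · apply List.ext_getElem (by rw [hsublen, hm])
        intro i h1i h2i
        rw [← List.getD_eq_getElem (sub T j (j + P.length)) 0 h1i,
            ← List.getD_eq_getElem P 0 h2i]
        rw [sub_getD T j (j + P.length) i hj1 (by omega)]
        exact hagree i (by omega)
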